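/- arXiv:1101.3129 — 3 statements merged into one kernel-verified Lean document; each statement's English description precedes it below -/
import Mathlib

section
/- The Loss-Yau spinor ψ(x) = (1+|x|²)^{-3/2}(I + i x·σ)(1,0)ᵀ satisfies the first-order equation (σ·p)ψ(x) = 3(1+|x|²)^{-1} ψ(x), where σ·p = -i Σⱼ σⱼ ∂/∂xⱼ. -/
open MeasureTheory Real
open scoped ENNReal

noncomputable section

def pauli : Fin 3 → Matrix (Fin 2) (Fin 2) ℂ :=
  ![!![0, 1; 1, 0], !![0, -Complex.I; Complex.I, 0], !![1, 0; 0, -1]]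

abbrev V3 := EuclideanSpace ℝ (Fin 3)
abbrev C2 := EuclideanSpace ℂ (Fin 2)

def sigmaP (f : V3 → C2) (x : V3) : C2 :=
  (WithLp.equiv 2 (Fin 2 → ℂ)).symm
    (-Complex.I • ∑ j : Fin 3, (pauli j).mulVec
      (WithLp.equiv 2 (Fin 2 → ℂ) (fderiv ℝ f x (EuclideanSpace.single j 1))))

def psiLY (x : V3) : C2 :=
  (WithLp.equiv 2 (Fin 2 → ℂ)).symm
    ((((1 + ‖x‖^2) ^ (-(3:ℝ)/2) : ℝ) : ℂ) •
      ((1 : Matrix (Fin 2) (Fin 2) ℂ) +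
        Complex.I • ∑ j : Fin 3, ((x j : ℝ) : ℂ) • pauli j).mulVec ![1, 0])

set_option maxHeartbeats 1600000 in
theorem loss_yau_equation :
    ∀ x : V3, sigmaP psiLY x = ((3 / (1 + ‖x‖ ^ 2) : ℝ)) • psiLY x := by
  intro x
  have ht : (0:ℝ) < 1 + ‖x‖^2 := by positivity
  set t : ℝ := 1 + ‖x‖^2 with htdef
  set s : ℝ := t ^ (-(3:ℝ)/2) with hsdef
  set s' : ℝ := t ^ (-(5:ℝ)/2) with hs'def
  -- component functions
  set aC : V3 → ℂ := fun y => (((1 + ‖y‖^2) ^ (-(3:ℝ)/2) : ℝ) : ℂ) with haCdef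
  set g : V3 → (Fin 2 → ℂ) := fun y =>
    ![aC y * (1 + Complex.I * (y 2 : ℝ)), aC y * (Complex.I * (y 0 : ℝ) - (y 1 : ℝ))] with hgdef
  -- derivatives of coordinates
  have hproj : ∀ j : Fin 3, HasFDerivAt (fun y : V3 => ((y j : ℝ) : ℂ))
      (Complex.ofRealCLM.comp (EuclideanSpace.proj j)) x := by
    intro j
    have h : HasFDerivAt (fun y : V3 => y j) (EuclideanSpace.proj (𝕜 := ℝ) j) x := by
      have := (EuclideanSpace.proj (𝕜 := ℝ) (ι := Fin 3) j).hasFDerivAt (x := x)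
      simpa using this
    exact Complex.ofRealCLM.hasFDerivAt.comp x h
  -- derivative of the scalar factor
  have hn : HasFDerivAt (fun y : V3 => 1 + ‖y‖^2) (2 • innerSL ℝ x) x := by
    simpa using ((hasFDerivAt_id x).norm_sq).const_add 1
  have ha : HasFDerivAt (fun y : V3 => ((1 + ‖y‖^2) ^ (-(3:ℝ)/2) : ℝ))
      ((-(3:ℝ)/2 * t ^ (-(3:ℝ)/2 - 1)) • (2 • innerSL ℝ x)) x := by
    have h1 := Real.hasDerivAt_rpow_const (x := t) (p := -(3:ℝ)/2) (Or.inl ht.ne')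
    exact h1.comp_hasFDerivAt x hn
  have hexp : t ^ (-(3:ℝ)/2 - 1) = s' := by
    rw [show (-(3:ℝ)/2 - 1) = -(5:ℝ)/2 by norm_num, hs'def]
  rw [hexp] at ha
  have haC : HasFDerivAt aC
      (Complex.ofRealCLM.comp ((-(3:ℝ)/2 * s') • (2 • innerSL ℝ x))) x :=
    Complex.ofRealCLM.hasFDerivAt.comp x ha
  -- derivatives of the two components
  set Da : V3 →L[ℝ] ℂ := Complex.ofRealCLM.comp ((-(3:ℝ)/2 * s') • (2 • innerSL ℝ x)) with hDadef
  have hc0 : HasFDerivAt (fun y : V3 => (1 : ℂ) + Complex.I * (y 2 : ℝ))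
      (Complex.I • (Complex.ofRealCLM.comp (EuclideanSpace.proj 2))) x :=
    ((hproj 2).const_mul Complex.I).const_add 1
  have hc1 : HasFDerivAt (fun y : V3 => Complex.I * (y 0 : ℝ) - (y 1 : ℝ))
      (Complex.I • (Complex.ofRealCLM.comp (EuclideanSpace.proj 0))
        - Complex.ofRealCLM.comp (EuclideanSpace.proj 1)) x :=
    ((hproj 0).const_mul Complex.I).sub (hproj 1)
  have hg0 := haC.mul hc0
  have hg1 := haC.mul hc1
  -- full derivative of g
  set D : Fin 2 → (V3 →L[ℝ] ℂ) :=
    ![aC x • (Complex.I • (Complex.ofRealCLM.comp (EuclideanSpace.proj 2)))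
        + ((1 : ℂ) + Complex.I * (x 2 : ℝ)) • Da,
      aC x • (Complex.I • (Complex.ofRealCLM.comp (EuclideanSpace.proj 0))
        - Complex.ofRealCLM.comp (EuclideanSpace.proj 1))
        + (Complex.I * (x 0 : ℝ) - (x 1 : ℝ)) • Da] with hDdef
  have hgD : HasFDerivAt g (ContinuousLinearMap.pi D) x := by
    apply hasFDerivAt_pi.2
    intro i
    fin_cases i
    · simp [hgdef, hDdef]
      exact hg0
    · simp [hgdef, hDdef]
      exact hg1
  -- identify psiLY with E ∘ g
  set E : (Fin 2 → ℂ) →L[ℝ] C2 :=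
    (((EuclideanSpace.equiv (Fin 2) ℂ).symm : (Fin 2 → ℂ) →L[ℂ] C2).restrictScalars ℝ) with hEdef
  have hpsieq : psiLY = fun y => E (g y) := by
    funext y
    apply (WithLp.equiv 2 (Fin 2 → ℂ)).injective
    funext i
    fin_cases i <;>
      simp only [psiLY, hEdef, hgdef, pauli, Matrix.mulVec, dotProduct,
        Fin.sum_univ_three, Fin.sum_univ_two, Matrix.one_apply,
        ContinuousLinearMap.coe_restrictScalars', ContinuousLinearEquiv.coe_coe,
        PiLp.continuousLinearEquiv_symm_apply, Equiv.apply_symm_apply,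
        Matrix.cons_val_zero, Matrix.cons_val_one, Matrix.head_cons, Matrix.cons_val',
        Matrix.empty_val', Matrix.cons_val_fin_one, Matrix.head_fin_const,
        Matrix.add_apply, Matrix.smul_apply, Pi.smul_apply, Fin.isValue,
        smul_eq_mul, Complex.real_smul] <;>
      · norm_num
        try ring_nf
        try simp [Complex.I_sq]
        try ring
  have hf : fderiv ℝ psiLY x = E.comp (ContinuousLinearMap.pi D) := by
    rw [hpsieq]
    exact (E.hasFDerivAt.comp x hgD).fderiv
  -- algebraic relations
  have hnorm : ‖x‖^2 = x 0^2 + x 1^2 + x 2^2 := by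
    rw [EuclideanSpace.norm_eq, Real.sq_sqrt (by positivity)]
    simp [Fin.sum_univ_three]
  have hs : s = s' * t := by
    rw [hsdef, hs'def, ← Real.rpow_add_one ht.ne']
    norm_num
  have hc : 3 / t * s = 3 * s' := by
    rw [hs]; field_simp
  have hsm : ∀ z : ℂ, (3 / t : ℝ) • ((s:ℝ) • z) = 3 * (s':ℂ) * z := by
    intro z
    rw [smul_smul, Complex.real_smul, hc]
    push_cast; ring
  have hsC : ((s:ℝ):ℂ) = (s':ℂ) * (1 + ((x 0:ℝ):ℂ)^2 + ((x 1:ℝ):ℂ)^2 + ((x 2:ℝ):ℂ)^2) := by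
    rw [hs, htdef, hnorm]; push_cast; ring
  unfold sigmaP
  rw [hf, hpsieq]
  apply (WithLp.equiv 2 (Fin 2 → ℂ)).injective
  funext i
  have hinner : ∀ k : Fin 3, (innerSL ℝ x) (EuclideanSpace.single k (1:ℝ)) = x k := by
    intro k
    simp [real_inner_comm, EuclideanSpace.inner_single_left, EuclideanSpace.inner_single_right]
  fin_cases i <;>
    simp [hEdef, hDdef, hDadef, hgdef, haCdef, pauli, Matrix.mulVec, dotProduct,
      Fin.sum_univ_three, Fin.sum_univ_two, hinner, ← htdef, ← hsdef,
      ContinuousLinearMap.coe_restrictScalars', PiLp.continuousLinearEquiv_symm_apply,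
      ContinuousLinearMap.pi_apply, EuclideanSpace.single_apply]
  all_goals
    rw [hsC, show ((t:ℝ):ℂ) = 1 + ((x 0:ℝ):ℂ)^2 + ((x 1:ℝ):ℂ)^2 + ((x 2:ℝ):ℂ)^2 by
      rw [htdef, hnorm]; push_cast; ring]
    have hne : (1 : ℂ) + ((x 0:ℝ):ℂ)^2 + ((x 1:ℝ):ℂ)^2 + ((x 2:ℝ):ℂ)^2 ≠ 0 := by
      intro hzero
      have : ((1 + (x 0^2 + x 1^2 + x 2^2) : ℝ) : ℂ) = 0 := by push_cast; rw [← hzero]; ring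
      have h2 : (1 + (x 0^2 + x 1^2 + x 2^2) : ℝ) = 0 := by exact_mod_cast this
      nlinarith [sq_nonneg (x 0), sq_nonneg (x 1), sq_nonneg (x 2)]
    field_simp
    apply Complex.ext <;>
      simp [Complex.ext_iff, Complex.add_re, Complex.add_im, Complex.mul_re, Complex.mul_im,
        Complex.sub_re, Complex.sub_im, Complex.neg_re, Complex.neg_im, ← Complex.ofReal_pow] <;>
      ring
    all_goals simp

end
end

section
/- Weak Hölder inequality: let p, q > 1 with 1/p + 1/q = 1. If f ∈ L^{p,∞}(ℝ^d) and g ∈ L^{q,∞}(ℝ^d), then fg ∈ L^{1,∞}(ℝ^d) and ‖fg‖_{1,∞} ≤ ((q/p)^{1/q} + (p/q)^{1/p}) ‖f‖_{p,∞} ‖g‖_{q,∞}. -/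
open MeasureTheory Real
open scoped ENNReal

noncomputable section

lemma real_calc1 (p q t a b : ℝ) (hp : 1 < p) (hq : 1 < q) (hpq : 1/p + 1/q = 1)
    (ht : 0 < t) (ha : 0 < a) (hb : 0 < b) :
    t * (a / ((p/q)^(1/(p*q)) * t^(1/p) * a^(1/q) * b^(-(1/p))))^p
      = (q/p)^(1/q) * (a*b) := by
  have hp0 : (0:ℝ) < p := lt_trans one_pos hp
  have hq0 : (0:ℝ) < q := lt_trans one_pos hq
  set s : ℝ := (p/q)^(1/(p*q)) * t^(1/p) * a^(1/q) * b^(-(1/p)) with hsdef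
  have hs : 0 < s := by positivity
  have h1 : 0 < t * (a/s)^p := by positivity
  have h2 : 0 < (q/p)^(1/q) * (a*b) := by positivity
  refine Real.log_injOn_pos (Set.mem_Ioi.mpr h1) (Set.mem_Ioi.mpr h2) ?_
  have hslog : Real.log s = (1/(p*q)) * (Real.log p - Real.log q)
      + (1/p) * Real.log t + (1/q) * Real.log a + (-(1/p)) * Real.log b := by
    rw [hsdef, Real.log_mul (by positivity) (by positivity),
      Real.log_mul (by positivity) (by positivity),
      Real.log_mul (by positivity) (by positivity),
      Real.log_rpow (by positivity), Real.log_rpow ht, Real.log_rpow ha,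
      Real.log_rpow hb, Real.log_div hp0.ne' hq0.ne']
  rw [Real.log_mul ht.ne' (by positivity : (0:ℝ) < (a/s)^p).ne',
    Real.log_rpow (by positivity), Real.log_div ha.ne' hs.ne',
    Real.log_mul (by positivity : (0:ℝ) < (q/p)^(1/q)).ne' (by positivity : (0:ℝ) < a*b).ne',
    Real.log_rpow (by positivity), Real.log_div hq0.ne' hp0.ne',
    Real.log_mul ha.ne' hb.ne', hslog]
  have hpqmul : p * q = p + q := by field_simp at hpq; linarith
  field_simp
  ring_nf
  linear_combination (Real.log a) * hpqmul

lemma real_calc2 (p q t a b : ℝ) (hp : 1 < p) (hq : 1 < q) (hpq : 1/p + 1/q = 1)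
    (ht : 0 < t) (ha : 0 < a) (hb : 0 < b) :
    t * (b / (t / ((p/q)^(1/(p*q)) * t^(1/p) * a^(1/q) * b^(-(1/p)))))^q
      = (p/q)^(1/p) * (a*b) := by
  have hp0 : (0:ℝ) < p := lt_trans one_pos hp
  have hq0 : (0:ℝ) < q := lt_trans one_pos hq
  set s : ℝ := (p/q)^(1/(p*q)) * t^(1/p) * a^(1/q) * b^(-(1/p)) with hsdef
  have hs : 0 < s := by positivity
  have h1 : 0 < t * (b/(t/s))^q := by positivity
  have h2 : 0 < (p/q)^(1/p) * (a*b) := by positivity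
  refine Real.log_injOn_pos (Set.mem_Ioi.mpr h1) (Set.mem_Ioi.mpr h2) ?_
  have hslog : Real.log s = (1/(p*q)) * (Real.log p - Real.log q)
      + (1/p) * Real.log t + (1/q) * Real.log a + (-(1/p)) * Real.log b := by
    rw [hsdef, Real.log_mul (by positivity) (by positivity),
      Real.log_mul (by positivity) (by positivity),
      Real.log_mul (by positivity) (by positivity),
      Real.log_rpow (by positivity), Real.log_rpow ht, Real.log_rpow ha,
      Real.log_rpow hb, Real.log_div hp0.ne' hq0.ne']
  rw [Real.log_mul ht.ne' (by positivity : (0:ℝ) < (b/(t/s))^q).ne',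
    Real.log_rpow (by positivity), Real.log_div hb.ne' (by positivity : (0:ℝ) < t/s).ne',
    Real.log_div ht.ne' hs.ne',
    Real.log_mul (by positivity : (0:ℝ) < (p/q)^(1/p)).ne' (by positivity : (0:ℝ) < a*b).ne',
    Real.log_rpow (by positivity), Real.log_div hp0.ne' hq0.ne',
    Real.log_mul ha.ne' hb.ne', hslog]
  have hpqmul : p * q = p + q := by field_simp at hpq; linarith
  field_simp
  ring_nf
  linear_combination (Real.log b - Real.log t) * hpqmul

lemma null_aux {α : Type*} [MeasurableSpace α] (μ : Measure α) (h : α → ℝ)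
    (H : ∀ s : ℝ, 0 < s → μ {x | s < ‖h x‖} = 0) :
    μ {x | h x ≠ 0} = 0 := by
  have hsub : {x | h x ≠ 0} ⊆ ⋃ n : ℕ, {x | 1/(n+1:ℝ) < ‖h x‖} := by
    intro x hx
    obtain ⟨n, hn⟩ := exists_nat_one_div_lt (norm_pos_iff.mpr hx)
    exact Set.mem_iUnion.mpr ⟨n, hn⟩
  exact measure_mono_null hsub (measure_iUnion_null fun n => H _ (by positivity))

def wnormq (q : ℝ) {α : Type*} [MeasurableSpace α] (μ : Measure α)
    {E : Type*} [Norm E] (f : α → E) : ℝ≥0∞ :=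
  ⨆ t : {t : ℝ // 0 < t}, ENNReal.ofReal t.1 * (μ {x | t.1 < ‖f x‖}) ^ (1/q)

lemma wnorm_bound {α : Type*} [MeasurableSpace α] (μ : Measure α) (h : α → ℝ)
    (p : ℝ) (hp0 : 0 < p) (s : ℝ) (hs : 0 < s) :
    μ {x | s < ‖h x‖} ≤ (wnormq p μ h / ENNReal.ofReal s) ^ p := by
  have h1 : ENNReal.ofReal s * (μ {x | s < ‖h x‖}) ^ (1/p) ≤ wnormq p μ h :=
    le_iSup (fun t : {t : ℝ // 0 < t} =>
      ENNReal.ofReal t.1 * (μ {x | t.1 < ‖h x‖}) ^ (1/p)) ⟨s, hs⟩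
  have h2 : (μ {x | s < ‖h x‖}) ^ (1/p) ≤ wnormq p μ h / ENNReal.ofReal s := by
    rw [ENNReal.le_div_iff_mul_le (Or.inl (ENNReal.ofReal_pos.mpr hs).ne')
      (Or.inl ENNReal.ofReal_ne_top)]
    rwa [mul_comm]
  calc μ {x | s < ‖h x‖} = ((μ {x | s < ‖h x‖}) ^ (1/p)) ^ p := by
        rw [← ENNReal.rpow_mul, one_div, inv_mul_cancel₀ hp0.ne', ENNReal.rpow_one]
    _ ≤ (wnormq p μ h / ENNReal.ofReal s) ^ p := ENNReal.rpow_le_rpow h2 hp0.le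

lemma wnorm_zero_null {α : Type*} [MeasurableSpace α] (μ : Measure α) (h : α → ℝ)
    (p : ℝ) (hp0 : 0 < p) (hz : wnormq p μ h = 0) : μ {x | h x ≠ 0} = 0 := by
  refine null_aux μ h fun s hs => ?_
  have := wnorm_bound μ h p hp0 s hs
  rw [hz] at this
  rw [ENNReal.zero_div, ENNReal.zero_rpow_of_pos hp0] at this
  exact le_antisymm this zero_le

theorem weak_holder (d : ℕ) (p q : ℝ) (hp : 1 < p) (hq : 1 < q)
    (hpq : 1 / p + 1 / q = 1)
    (f g : EuclideanSpace ℝ (Fin d) → ℝ) (hf : Measurable f) (hg : Measurable g)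
    (hfw : wnormq p volume f < ⊤) (hgw : wnormq q volume g < ⊤) :
    wnormq 1 volume (fun x => f x * g x) < ⊤ ∧
    wnormq 1 volume (fun x => f x * g x) ≤
      ENNReal.ofReal ((q / p) ^ (1 / q) + (p / q) ^ (1 / p)) *
        (wnormq p volume f * wnormq q volume g) := by
  have hp0 : (0:ℝ) < p := lt_trans one_pos hp
  have hq0 : (0:ℝ) < q := lt_trans one_pos hq
  set A := wnormq p volume f with hA
  set B := wnormq q volume g with hB
  set C := ENNReal.ofReal ((q / p) ^ (1 / q) + (p / q) ^ (1 / p)) with hC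
  have key : ∀ t : ℝ, 0 < t →
      ENNReal.ofReal t * volume {x | t < ‖f x * g x‖} ≤ C * (A * B) := by
    intro t ht
    by_cases hA0 : A = 0
    · have hnull : volume {x | f x ≠ 0} = 0 :=
        wnorm_zero_null volume f p hp0 (hA.symm.trans hA0)
      have : volume {x | t < ‖f x * g x‖} = 0 := by
        refine measure_mono_null (fun x hx => ?_) hnull
        simp only [Set.mem_setOf_eq] at hx ⊢
        intro hfx
        rw [hfx, zero_mul, norm_zero] at hx
        exact absurd hx (not_lt.mpr ht.le)
      rw [this, mul_zero]
      exact zero_le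
    by_cases hB0 : B = 0
    · have hnull : volume {x | g x ≠ 0} = 0 :=
        wnorm_zero_null volume g q hq0 (hB.symm.trans hB0)
      have : volume {x | t < ‖f x * g x‖} = 0 := by
        refine measure_mono_null (fun x hx => ?_) hnull
        simp only [Set.mem_setOf_eq] at hx ⊢
        intro hgx
        rw [hgx, mul_zero, norm_zero] at hx
        exact absurd hx (not_lt.mpr ht.le)
      rw [this, mul_zero]
      exact zero_le
    · -- main case
      have haT : A ≠ ⊤ := hfw.ne
      have hbT : B ≠ ⊤ := hgw.ne
      set a : ℝ := A.toReal with hadef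
      set b : ℝ := B.toReal with hbdef
      have ha : 0 < a := ENNReal.toReal_pos hA0 haT
      have hb : 0 < b := ENNReal.toReal_pos hB0 hbT
      have hAa : A = ENNReal.ofReal a := (ENNReal.ofReal_toReal haT).symm
      have hBb : B = ENNReal.ofReal b := (ENNReal.ofReal_toReal hbT).symm
      set s : ℝ := (p/q)^(1/(p*q)) * t^(1/p) * a^(1/q) * b^(-(1/p)) with hsdef
      have hs : 0 < s := by positivity
      have hts : 0 < t / s := by positivity
      have hsub : {x | t < ‖f x * g x‖} ⊆ {x | s < ‖f x‖} ∪ {x | t/s < ‖g x‖} := by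
        intro x hx
        simp only [Set.mem_union, Set.mem_setOf_eq]
        by_contra hcon
        push_neg at hcon
        have : ‖f x * g x‖ ≤ t := by
          rw [norm_mul]
          calc ‖f x‖ * ‖g x‖ ≤ s * (t/s) :=
                mul_le_mul hcon.1 hcon.2 (norm_nonneg _) hs.le
            _ = t := by field_simp
        exact absurd hx (by simpa using not_lt.mpr this)
      have hnn1 : (0:ℝ) ≤ (a/s)^p := by positivity
      have hnn2 : (0:ℝ) ≤ (b/(t/s))^q := by positivity
      calc ENNReal.ofReal t * volume {x | t < ‖f x * g x‖}
          ≤ ENNReal.ofReal t * (volume {x | s < ‖f x‖} + volume {x | t/s < ‖g x‖}) :=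
            mul_le_mul_right ((measure_mono hsub).trans (measure_union_le _ _)) _
        _ ≤ ENNReal.ofReal t * ((A / ENNReal.ofReal s) ^ p + (B / ENNReal.ofReal (t/s)) ^ q) :=
            mul_le_mul_right (add_le_add (wnorm_bound volume f p hp0 s hs)
              (wnorm_bound volume g q hq0 (t/s) hts)) _
        _ = ENNReal.ofReal (t * ((a/s)^p + (b/(t/s))^q)) := by
            rw [hAa, hBb, ← ENNReal.ofReal_div_of_pos hs, ← ENNReal.ofReal_div_of_pos hts,
              ENNReal.ofReal_rpow_of_pos (by positivity), ENNReal.ofReal_rpow_of_pos (by positivity),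
              ← ENNReal.ofReal_add hnn1 hnn2, ← ENNReal.ofReal_mul ht.le]
        _ = C * (A * B) := by
            rw [hC, hAa, hBb, ← ENNReal.ofReal_mul ha.le, ← ENNReal.ofReal_mul (by positivity)]
            congr 1
            rw [mul_add, real_calc1 p q t a b hp hq hpq ht ha hb,
              real_calc2 p q t a b hp hq hpq ht ha hb, add_mul]
  have main : wnormq 1 volume (fun x => f x * g x) ≤ C * (A * B) := by
    refine iSup_le ?_
    rintro ⟨t, ht⟩
    have := key t ht
    simpa using this
  refine ⟨lt_of_le_of_lt main ?_, main⟩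
  exact ENNReal.mul_lt_top ENNReal.ofReal_lt_top (ENNReal.mul_lt_top hfw hgw)

end
end

section
/- For 1 < p < 3 and p* = 3p/(3−p), the Loss-Yau spinor satisfies ‖ψ‖^{p*}_{L^{p*}(ℝ³)} = 4π ∫₀^∞ (1+r²)^{-p*} r² dr ≥ 4π · 2^{-p*} · 3^{-2} · 2p/(p−1), and ‖(σ·p)ψ‖^p_{L^p(ℝ³)} = 4π·3^p ∫₀^∞ (1+r²)^{-2p} r² dr ≤ 16π·3^{p−1}·p/(4p−3). -/
open MeasureTheory Real
open scoped ENNReal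

noncomputable section

/-! ### Auxiliary definitions -/

def LYw (x : V3) : Fin 2 → ℂ := ![1 + Complex.I * x 2, Complex.I * x 0 - x 1]
def LYc (x : V3) : ℝ := (1 + ‖x‖^2) ^ (-(3:ℝ)/2)
def LYdw : Fin 3 → Fin 2 → ℂ := ![![0, Complex.I], ![0, -1], ![Complex.I, 0]]

lemma norm_sq_V3 (x : V3) : ‖x‖^2 = x 0 ^ 2 + x 1 ^ 2 + x 2 ^ 2 := by
  rw [EuclideanSpace.norm_eq, sq_sqrt (by positivity)]
  simp [Fin.sum_univ_three, sq_abs]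

lemma mulvec_eq (x : V3) :
    ((1 : Matrix (Fin 2) (Fin 2) ℂ) +
        Complex.I • ∑ j : Fin 3, ((x j : ℝ) : ℂ) • pauli j).mulVec ![1, 0] = LYw x := by
  funext i
  fin_cases i <;>
    simp [Matrix.mulVec, Matrix.one_apply, pauli, Fin.sum_univ_three, LYw,
      dotProduct, Fin.sum_univ_two, Matrix.vecHead, Matrix.vecTail] <;>
    ring_nf <;> simp [Complex.I_sq] <;> ring_nf

lemma psiLY_eq (x : V3) :
    psiLY x = (WithLp.equiv 2 (Fin 2 → ℂ)).symm (fun i => (LYc x : ℂ) * LYw x i) := by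
  rw [psiLY, mulvec_eq]
  rfl

/-! ### Norm computations -/

lemma normsq_LYw (x : V3) :
    ‖LYw x 0‖ ^ 2 + ‖LYw x 1‖ ^ 2 = 1 + ‖x‖^2 := by
  rw [norm_sq_V3]
  simp only [LYw, ← Complex.normSq_eq_norm_sq, Complex.normSq_apply]
  simp [Complex.add_re, Complex.add_im, Complex.mul_re, Complex.mul_im]
  ring

lemma norm_smul_LYw (x : V3) (c : ℝ) (hc : 0 ≤ c) :
    ‖((WithLp.equiv 2 (Fin 2 → ℂ)).symm (fun i => (c : ℂ) * LYw x i) : C2)‖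
      = c * Real.sqrt (1 + ‖x‖^2) := by
  rw [EuclideanSpace.norm_eq]
  simp only [WithLp.equiv_symm_apply, PiLp.toLp_apply]
  rw [Fin.sum_univ_two]
  simp only [norm_mul, Complex.norm_real, Real.norm_eq_abs, abs_of_nonneg hc]
  rw [show (c * ‖LYw x 0‖)^2 + (c * ‖LYw x 1‖)^2
      = c^2 * (‖LYw x 0‖ ^ 2 + ‖LYw x 1‖ ^ 2) by ring,
    normsq_LYw, Real.sqrt_mul (by positivity), Real.sqrt_sq hc]

lemma norm_psiLY (x : V3) : ‖psiLY x‖ = (1 + ‖x‖^2) ^ (-(1:ℝ)) := by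
  have hn : (0:ℝ) < 1 + ‖x‖^2 := by positivity
  rw [psiLY_eq, norm_smul_LYw x (LYc x) (by unfold LYc; positivity), LYc,
    Real.sqrt_eq_rpow, ← Real.rpow_add hn]
  norm_num

/-! ### Derivative computations -/

def LYwD : Fin 2 → (V3 →L[ℝ] ℂ) :=
  ![Complex.I • (Complex.ofRealCLM.comp (EuclideanSpace.proj (2 : Fin 3))),
    Complex.I • (Complex.ofRealCLM.comp (EuclideanSpace.proj (0 : Fin 3)))
      - Complex.ofRealCLM.comp (EuclideanSpace.proj (1 : Fin 3))]

def LYcD (x : V3) : V3 →L[ℝ] ℝ :=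
  ((-(3:ℝ)/2) * (1 + ‖x‖^2) ^ ((-(3:ℝ)/2) - 1)) •
    (2 • ((innerSL ℝ x).comp (ContinuousLinearMap.id ℝ V3)))

lemma hasFDerivAt_LYc (x : V3) : HasFDerivAt LYc (LYcD x) x := by
  have h1 : HasFDerivAt (fun y : V3 => 1 + ‖y‖^2)
      (2 • ((innerSL ℝ x).comp (ContinuousLinearMap.id ℝ V3))) x := by
    simpa using ((hasFDerivAt_id x).norm_sq).const_add 1
  have := h1.rpow_const (p := -(3:ℝ)/2) (Or.inl (by positivity))
  exact this

lemma hasFDerivAt_LYw (x : V3) (i : Fin 2) :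
    HasFDerivAt (fun y : V3 => LYw y i) (LYwD i) x := by
  have h : ∀ j : Fin 3, HasFDerivAt (fun y : V3 => ((y j : ℝ) : ℂ))
      (Complex.ofRealCLM.comp (EuclideanSpace.proj j)) x :=
    fun j => (Complex.ofRealCLM.comp (EuclideanSpace.proj j)).hasFDerivAt
  fin_cases i
  · simpa [LYw, LYwD] using ((h 2).const_mul Complex.I).const_add 1
  · exact ((h 0).const_mul Complex.I).sub (h 1)

def LYfD (x : V3) : V3 →L[ℝ] (Fin 2 → ℂ) :=
  ContinuousLinearMap.pi fun i =>
    (LYc x : ℂ) • LYwD i + (LYw x i) • (Complex.ofRealCLM.comp (LYcD x))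

lemma hasFDerivAt_vec (x : V3) :
    HasFDerivAt (fun y : V3 => (fun i => (LYc y : ℂ) * LYw y i)) (LYfD x) x := by
  apply hasFDerivAt_pi.2
  intro i
  have hc : HasFDerivAt (fun y : V3 => ((LYc y : ℝ) : ℂ))
      (Complex.ofRealCLM.comp (LYcD x)) x :=
    Complex.ofRealCLM.hasFDerivAt.comp x (hasFDerivAt_LYc x)
  exact hc.mul (hasFDerivAt_LYw x i)

def Epi : (Fin 2 → ℂ) →L[ℝ] C2 :=
  ((PiLp.continuousLinearEquiv 2 ℂ
    (fun _ : Fin 2 => ℂ)).symm.toContinuousLinearMap).restrictScalars ℝ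

lemma hasFDerivAt_psiLY (x : V3) :
    HasFDerivAt psiLY (Epi.comp (LYfD x)) x := by
  have h := (Epi.hasFDerivAt).comp x (hasFDerivAt_vec x)
  have e : psiLY = ⇑Epi ∘ fun y i => (LYc y : ℂ) * LYw y i := by
    funext y
    rw [psiLY_eq]
    rfl
  rw [e]
  exact h

lemma equiv_fderiv_psiLY (x : V3) (j : Fin 3) :
    WithLp.equiv 2 (Fin 2 → ℂ) (fderiv ℝ psiLY x (EuclideanSpace.single j 1))
      = fun i => (LYc x : ℂ) * LYdw j i
          + (((-3) * (1 + ‖x‖^2) ^ (-(5:ℝ)/2) * x j : ℝ) : ℂ) * LYw x i := by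
  rw [(hasFDerivAt_psiLY x).fderiv]
  funext i
  have hinner : (innerSL ℝ x) (EuclideanSpace.single j (1:ℝ)) = x j := by
    simp [EuclideanSpace.inner_single_right, real_inner_comm]
  have harith : (1 + ‖x‖^2) ^ ((-(3:ℝ)/2) - 1) = (1 + ‖x‖^2) ^ (-(5:ℝ)/2) := by
    norm_num
  have : (WithLp.equiv 2 (Fin 2 → ℂ)) (Epi.comp (LYfD x) (EuclideanSpace.single j 1))
      = LYfD x (EuclideanSpace.single j 1) := rfl
  rw [this]
  simp only [LYfD, ContinuousLinearMap.pi_apply, ContinuousLinearMap.add_apply,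
    ContinuousLinearMap.smul_apply, ContinuousLinearMap.comp_apply, LYcD,
    ContinuousLinearMap.id_apply, hinner, harith]
  fin_cases j <;> fin_cases i <;>
    simp [LYwD, LYdw, EuclideanSpace.single_apply, smul_eq_mul] <;> push_cast <;> ring

lemma I_pow_three : Complex.I ^ 3 = -Complex.I := by
  rw [pow_succ, Complex.I_sq]; ring

lemma mulVec2 (M : Matrix (Fin 2) (Fin 2) ℂ) (v : Fin 2 → ℂ) (i : Fin 2) :
    M.mulVec v i = M i 0 * v 0 + M i 1 * v 1 := by
  simp [Matrix.mulVec, dotProduct, Fin.sum_univ_two]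

lemma sigmaP_psiLY (x : V3) :
    sigmaP psiLY x = (WithLp.equiv 2 (Fin 2 → ℂ)).symm
      (fun i => ((3 * (1 + ‖x‖^2) ^ (-(5:ℝ)/2) : ℝ) : ℂ) * LYw x i) := by
  unfold sigmaP
  congr 1
  have hc : LYc x = (1 + ‖x‖^2) ^ (-(5:ℝ)/2) * (1 + ‖x‖^2) := by
    rw [LYc, show (-(3:ℝ)/2) = (-(5:ℝ)/2) + 1 by norm_num,
      Real.rpow_add (by positivity), Real.rpow_one]
  have hn := norm_sq_V3 x
  funext i
  simp only [equiv_fderiv_psiLY, Pi.smul_apply, Finset.sum_apply, Fin.sum_univ_three, mulVec2,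
    Pi.add_apply, hc, pauli, LYdw, LYw, Matrix.cons_val_zero, Matrix.cons_val_one,
    Matrix.cons_val_two, Matrix.head_cons, Matrix.vecTail, Matrix.vecHead, Matrix.of_apply,
    Matrix.cons_val', Matrix.empty_val', Matrix.cons_val_fin_one, Fin.isValue,
    Function.comp_apply, Fin.succ_zero_eq_one, Fin.succ_one_eq_two, smul_eq_mul]
  fin_cases i <;>
    simp only [Matrix.vecHead, Matrix.vecTail, Matrix.cons_val_zero, Matrix.cons_val_one,
      Matrix.head_cons, Function.comp_apply, Fin.isValue, Fin.zero_eta, Fin.mk_one] <;>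
    push_cast [hn] <;> ring_nf <;>
    simp only [Complex.I_sq, I_pow_three] <;> ring_nf

lemma norm_sigmaP_psiLY (x : V3) : ‖sigmaP psiLY x‖ = 3 * (1 + ‖x‖^2) ^ (-(2:ℝ)) := by
  have hn : (0:ℝ) < 1 + ‖x‖^2 := by positivity
  rw [sigmaP_psiLY, norm_smul_LYw x _ (by positivity), Real.sqrt_eq_rpow,
    mul_assoc, ← Real.rpow_add hn]
  norm_num

/-! ### Radial integration -/

lemma volume_ball_V3 : (volume (Metric.ball (0:V3) 1)).toReal = 4 * π / 3 := by
  rw [EuclideanSpace.volume_ball]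
  have hcard : Fintype.card (Fin 3) = 3 := by simp
  rw [hcard]
  have hG : Real.Gamma ((3:ℕ)/2 + 1) = 3/4 * Real.sqrt π := by
    have h1 : ((3:ℕ):ℝ)/2 + 1 = (3:ℝ)/2 + 1 := by norm_num
    rw [h1, Real.Gamma_add_one (by norm_num),
      show (3:ℝ)/2 = 1/2 + 1 by norm_num, Real.Gamma_add_one (by norm_num),
      Real.Gamma_one_half_eq]
    ring
  rw [hG]
  have hs : Real.sqrt π ^ 3 = π * Real.sqrt π := by
    rw [pow_succ, sq_sqrt pi_nonneg]
  rw [hs]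
  have hsp : 0 < Real.sqrt π := Real.sqrt_pos.2 pi_pos
  rw [ENNReal.ofReal_one, one_pow, one_mul, ENNReal.toReal_ofReal (by positivity)]
  rw [show π * √π / (3 / 4 * √π) = 4 * π / 3 * (√π / √π) by ring,
    div_self hsp.ne', mul_one]

lemma radial_integral (g : ℝ → ℝ) :
    ∫ x : V3, g ‖x‖ = 4 * π * ∫ r in Set.Ioi (0:ℝ), g r * r^2 := by
  rw [MeasureTheory.integral_fun_norm_addHaar volume g]
  have hdim : Module.finrank ℝ V3 = 3 := finrank_euclideanSpace_fin
  rw [hdim, measureReal_def, volume_ball_V3]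
  have : ∫ r in Set.Ioi (0:ℝ), r ^ (3-1) • g r = ∫ r in Set.Ioi (0:ℝ), g r * r^2 := by
    apply setIntegral_congr_fun measurableSet_Ioi
    intro r _
    simp [smul_eq_mul, mul_comm]
  rw [this]
  push_cast [smul_eq_mul]
  ring

/-! ### Scalar integral estimates -/

lemma cont_f (q : ℝ) : Continuous (fun r : ℝ => (1 + r^2) ^ (-q) * r^2) := by
  apply Continuous.mul _ (continuous_pow 2)
  apply Continuous.rpow_const (by continuity)
  intro x; left; positivity

lemma rpow_sq_Ioi (q r : ℝ) (hr : 0 < r) : (r^2 : ℝ) ^ (-q) = r ^ (-(2*q)) := by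
  rw [← Real.rpow_natCast r 2, ← Real.rpow_mul hr.le]
  norm_num

lemma f_le_on_Ioi (q : ℝ) (hq : 0 ≤ q) {r : ℝ} (hr : 1 < r) :
    (1 + r^2) ^ (-q) * r^2 ≤ r ^ (2 - 2*q) := by
  have hr0 : (0:ℝ) < r := lt_trans one_pos hr
  have h1 : (1 + r^2) ^ (-q) ≤ (r^2) ^ (-q) :=
    Real.rpow_le_rpow_of_nonpos (by positivity) (by nlinarith) (by linarith)
  calc (1 + r^2) ^ (-q) * r^2 ≤ (r^2) ^ (-q) * r^2 :=
        mul_le_mul_of_nonneg_right h1 (by positivity)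
    _ = r ^ (2 - 2*q) := by
        rw [rpow_sq_Ioi q r hr0, show (r:ℝ)^2 = r ^ (2:ℝ) by
            rw [← Real.rpow_natCast r 2]; norm_num,
          ← Real.rpow_add hr0]
        ring_nf

lemma integrableOn_f_Ioi1 (q : ℝ) (hq : 3/2 < q) :
    IntegrableOn (fun r : ℝ => (1 + r^2) ^ (-q) * r^2) (Set.Ioi 1) := by
  have hdom : IntegrableOn (fun r : ℝ => r ^ (2 - 2*q)) (Set.Ioi 1) :=
    integrableOn_Ioi_rpow_of_lt (by linarith) one_pos
  apply hdom.mono' ((cont_f q).aestronglyMeasurable.restrict)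
  filter_upwards [ae_restrict_mem measurableSet_Ioi] with r hr
  have hr1 : (1:ℝ) < r := hr
  have hr0 : (0:ℝ) < r := lt_trans one_pos hr1
  rw [Real.norm_eq_abs, abs_of_nonneg (by positivity)]
  exact f_le_on_Ioi q (by linarith) hr1

lemma integrableOn_f_Ioc (q : ℝ) :
    IntegrableOn (fun r : ℝ => (1 + r^2) ^ (-q) * r^2) (Set.Ioc 0 1) :=
  (cont_f q).integrableOn_Ioc

lemma integral_split (q : ℝ) (hq : 3/2 < q) :
    ∫ r in Set.Ioi (0:ℝ), (1 + r^2) ^ (-q) * r^2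
      = (∫ r in Set.Ioc (0:ℝ) 1, (1 + r^2) ^ (-q) * r^2)
        + ∫ r in Set.Ioi (1:ℝ), (1 + r^2) ^ (-q) * r^2 := by
  rw [← Set.Ioc_union_Ioi_eq_Ioi (zero_le_one), setIntegral_union
    (Set.Ioc_disjoint_Ioi le_rfl) measurableSet_Ioi (integrableOn_f_Ioc q)
    (integrableOn_f_Ioi1 q hq)]

lemma int_Ioc_sq : ∫ r in Set.Ioc (0:ℝ) 1, r^2 = 1/3 := by
  rw [← intervalIntegral.integral_of_le zero_le_one, integral_pow]
  norm_num

lemma int_Ioi_rpow (q : ℝ) (hq : 3/2 < q) :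
    ∫ r in Set.Ioi (1:ℝ), r ^ (2 - 2*q) = 1/(2*q-3) := by
  rw [integral_Ioi_rpow_of_lt (by linarith) one_pos, Real.one_rpow]
  rw [show 2 - 2*q + 1 = -(2*q - 3) by ring, div_neg, neg_div, neg_neg]

lemma lower_bound (q : ℝ) (hq : 3/2 < q) :
    2^(-q) * (1/3 + 1/(2*q-3)) ≤ ∫ r in Set.Ioi (0:ℝ), (1 + r^2) ^ (-q) * r^2 := by
  have hq0 : (0:ℝ) ≤ q := by linarith
  rw [integral_split q hq]
  have h1 : 2^(-q) * (1/3) ≤ ∫ r in Set.Ioc (0:ℝ) 1, (1 + r^2) ^ (-q) * r^2 := by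
    have : 2^(-q) * (1/3) = ∫ r in Set.Ioc (0:ℝ) 1, 2^(-q) * r^2 := by
      rw [integral_const_mul, int_Ioc_sq]
    rw [this]
    apply setIntegral_mono_on
    · exact (Continuous.integrableOn_Ioc (by continuity))
    · exact integrableOn_f_Ioc q
    · exact measurableSet_Ioc
    · intro r hr
      apply mul_le_mul_of_nonneg_right _ (by positivity)
      exact Real.rpow_le_rpow_of_nonpos (by positivity) (by nlinarith [hr.1, hr.2]) (by linarith)
  have h2 : 2^(-q) * (1/(2*q-3)) ≤ ∫ r in Set.Ioi (1:ℝ), (1 + r^2) ^ (-q) * r^2 := by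
    have heval : 2^(-q) * (1/(2*q-3)) = ∫ r in Set.Ioi (1:ℝ), 2^(-q) * r ^ (2-2*q) := by
      rw [integral_const_mul, int_Ioi_rpow q hq]
    rw [heval]
    apply setIntegral_mono_on
    · exact (integrableOn_Ioi_rpow_of_lt (by linarith) one_pos).const_mul _
    · exact integrableOn_f_Ioi1 q hq
    · exact measurableSet_Ioi
    · intro r hr
      have hr1 : (1:ℝ) < r := hr
      have hr0 : (0:ℝ) < r := by linarith
      have hsplit : ((2:ℝ)*r^2)^(-q) * r^2 = 2^(-q) * r ^ (2-2*q) := by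
        rw [Real.mul_rpow (by norm_num) (by positivity), rpow_sq_Ioi q r hr0, mul_assoc]
        rw [show (r:ℝ)^2 = r ^ (2:ℝ) by rw [← Real.rpow_natCast r 2]; norm_num]
        rw [← Real.rpow_add hr0, show -(2*q)+2 = 2-2*q by ring]
      rw [← hsplit]
      apply mul_le_mul_of_nonneg_right _ (by positivity)
      exact Real.rpow_le_rpow_of_nonpos (by positivity) (by nlinarith) (by linarith)
  linarith

lemma upper_bound (q : ℝ) (hq : 3/2 < q) :
    (∫ r in Set.Ioi (0:ℝ), (1 + r^2) ^ (-q) * r^2) ≤ 1/3 + 1/(2*q-3) := by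
  rw [integral_split q hq]
  have h1 : (∫ r in Set.Ioc (0:ℝ) 1, (1 + r^2) ^ (-q) * r^2) ≤ 1/3 := by
    rw [← int_Ioc_sq]
    apply setIntegral_mono_on (integrableOn_f_Ioc q)
      (Continuous.integrableOn_Ioc (by continuity)) measurableSet_Ioc
    intro r hr
    have : (1 + r^2) ^ (-q) ≤ 1 :=
      Real.rpow_le_one_of_one_le_of_nonpos (by nlinarith [sq_nonneg r]) (by linarith)
    nlinarith [sq_nonneg r]
  have h2 : (∫ r in Set.Ioi (1:ℝ), (1 + r^2) ^ (-q) * r^2) ≤ 1/(2*q-3) := by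
    rw [← int_Ioi_rpow q hq]
    apply setIntegral_mono_on (integrableOn_f_Ioi1 q hq)
      (integrableOn_Ioi_rpow_of_lt (by linarith) one_pos) measurableSet_Ioi
    intro r hr
    exact f_le_on_Ioi q (by linarith) hr
  linarith

/-! ### Main theorem -/

theorem loss_yau_norm_estimates (p : ℝ) (hp1 : 1 < p) (hp3 : p < 3) :
    (∫ x : V3, ‖psiLY x‖ ^ (3 * p / (3 - p))) =
        4 * π * ∫ r in Set.Ioi (0:ℝ), (1 + r ^ 2) ^ (-(3 * p / (3 - p))) * r ^ 2 ∧
    4 * π * 2 ^ (-(3 * p / (3 - p))) * 3 ^ (-(2:ℝ)) * (2 * p / (p - 1)) ≤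
        4 * π * ∫ r in Set.Ioi (0:ℝ), (1 + r ^ 2) ^ (-(3 * p / (3 - p))) * r ^ 2 ∧
    (∫ x : V3, ‖sigmaP psiLY x‖ ^ p) =
        4 * π * 3 ^ p * ∫ r in Set.Ioi (0:ℝ), (1 + r ^ 2) ^ (-(2 * p)) * r ^ 2 ∧
    4 * π * 3 ^ p * (∫ r in Set.Ioi (0:ℝ), (1 + r ^ 2) ^ (-(2 * p)) * r ^ 2) ≤
        16 * π * 3 ^ (p - 1) * (p / (4 * p - 3)) := by
  have h3p : (0:ℝ) < 3 - p := by linarith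
  have hp0 : (0:ℝ) < p := by linarith
  set q : ℝ := 3 * p / (3 - p) with hq_def
  have hq : 3/2 < q := by
    rw [hq_def, lt_div_iff₀ h3p]; nlinarith
  have hq2 : 3/2 < 2 * p := by linarith
  refine ⟨?_, ?_, ?_, ?_⟩
  · -- part 1
    have hpt : ∀ x : V3, ‖psiLY x‖ ^ q = (fun r : ℝ => (1 + r^2) ^ (-q)) ‖x‖ := by
      intro x
      have hn : (0:ℝ) < 1 + ‖x‖^2 := by positivity
      rw [norm_psiLY, ← Real.rpow_mul hn.le, neg_one_mul]
    calc (∫ x : V3, ‖psiLY x‖ ^ q) = ∫ x : V3, (fun r : ℝ => (1 + r^2) ^ (-q)) ‖x‖ := by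
          simp_rw [hpt]
      _ = 4 * π * ∫ r in Set.Ioi (0:ℝ), (1 + r^2) ^ (-q) * r^2 := by
          simpa using radial_integral (fun r : ℝ => (1 + r^2) ^ (-q))
  · -- part 2
    have hle := lower_bound q hq
    have heq : 2 ^ (-q) * (1/3 + 1/(2*q-3)) = 2 ^ (-q) * 3 ^ (-(2:ℝ)) * (2 * p / (p - 1)) := by
      have h32 : (3:ℝ) ^ (-(2:ℝ)) = 1/9 := by
        rw [show (-(2:ℝ)) = ((-2 : ℤ) : ℝ) by norm_num, Real.rpow_intCast]
        norm_num
      have hd : 2*q - 3 = 9*(p-1)/(3-p) := by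
        rw [hq_def]; field_simp; ring
      rw [h32, hd]
      have hp1' : p - 1 ≠ 0 := by linarith
      field_simp
      ring
    calc 4 * π * 2 ^ (-q) * 3 ^ (-(2:ℝ)) * (2 * p / (p - 1))
        = 4 * π * (2 ^ (-q) * (1/3 + 1/(2*q-3))) := by rw [heq]; ring
      _ ≤ 4 * π * ∫ r in Set.Ioi (0:ℝ), (1 + r^2) ^ (-q) * r^2 := by
          apply mul_le_mul_of_nonneg_left hle (by positivity)
  · -- part 3
    have hpt : ∀ x : V3, ‖sigmaP psiLY x‖ ^ p
        = (fun r : ℝ => 3 ^ p * (1 + r^2) ^ (-(2*p))) ‖x‖ := by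
      intro x
      have hn : (0:ℝ) < 1 + ‖x‖^2 := by positivity
      rw [norm_sigmaP_psiLY, Real.mul_rpow (by norm_num) (by positivity),
        ← Real.rpow_mul hn.le]
      norm_num
    calc (∫ x : V3, ‖sigmaP psiLY x‖ ^ p)
        = ∫ x : V3, (fun r : ℝ => 3 ^ p * (1 + r^2) ^ (-(2*p))) ‖x‖ := by
          simp_rw [hpt]
      _ = 4 * π * ∫ r in Set.Ioi (0:ℝ), 3 ^ p * (1 + r^2) ^ (-(2*p)) * r^2 := by
          simpa using radial_integral (fun r : ℝ => 3 ^ p * (1 + r^2) ^ (-(2*p)))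
      _ = 4 * π * 3 ^ p * ∫ r in Set.Ioi (0:ℝ), (1 + r^2) ^ (-(2*p)) * r^2 := by
          simp_rw [mul_assoc ((3:ℝ)^p)]
          rw [integral_const_mul]
          ring
  · -- part 4
    have hub := upper_bound (2*p) hq2
    have h4p : (0:ℝ) < 4*p - 3 := by linarith
    have h3pow : (3:ℝ) ^ p = 3 * 3 ^ (p-1) := by
      rw [show p = (p-1) + 1 by ring, Real.rpow_add (by norm_num), Real.rpow_one]
      ring_nf
    have heq : 4 * π * 3 ^ p * (1/3 + 1/(2*(2*p)-3)) = 16 * π * 3 ^ (p-1) * (p / (4*p-3)) := by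
      rw [h3pow]
      have : 2*(2*p) - 3 = 4*p - 3 := by ring
      rw [this]
      field_simp
      ring
    calc 4 * π * 3 ^ p * (∫ r in Set.Ioi (0:ℝ), (1 + r^2) ^ (-(2*p)) * r^2)
        ≤ 4 * π * 3 ^ p * (1/3 + 1/(2*(2*p)-3)) := by
          apply mul_le_mul_of_nonneg_left hub (by positivity)
      _ = 16 * π * 3 ^ (p-1) * (p / (4*p-3)) := heq

end
end
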